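/- Cut admissibility, positive principal case: if Γ and U are suspension-normal (all suspended propositions in Γ and in U are atomic), Γ ⊢ [A⁺] is derivable, and Γ ; A⁺, Ω ⊢ U is derivable, then Γ ; Ω ⊢ U is derivable in the focused sequent calculus for polarized intuitionistic logic. -/

import Mathlib

namespace StructuralFocalization

/- Polarized propositional intuitionistic logic -/
mutual
inductive PProp : Type
  | atom : Nat → PProp
  | down : NProp → PProp
  | bot  : PProp
  | or   : PProp → PProp → PProp
  | top  : PProp
  | and  : PProp → PProp → PProp
inductive NProp : Type
  | atom : Nat → NProp
  | up   : PProp → NProp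
  | imp  : PProp → NProp → NProp
  | top  : NProp
  | and  : NProp → NProp → NProp
end

/- Hypotheses: negative propositions or suspended positives ⟨A⁺⟩ -/
inductive Hyp : Type
  | neg  : NProp → Hyp
  | susp : PProp → Hyp

/- Succedents: A⁺, A⁻, or suspended ⟨A⁻⟩ -/
inductive Succ : Type
  | pos  : PProp → Succ
  | neg  : NProp → Succ
  | susp : NProp → Succ

abbrev Ctx := List Hyp

def Succ.stable : Succ → Prop
  | .pos _ => True
  | .susp _ => True
  | .neg _ => False

def Hyp.suspNormal : Hyp → Prop
  | .susp (PProp.atom _) => True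
  | .susp _ => False
  | .neg _ => True

def Ctx.suspNormal (Γ : Ctx) : Prop := ∀ h ∈ Γ, h.suspNormal

def Succ.suspNormal : Succ → Prop
  | .susp (NProp.atom _) => True
  | .susp _ => False
  | _ => True

/- The focused sequent calculus (Figures 3 and 4 of "Structural focalization",
   with the generalized id⁺/id⁻ rules for arbitrary suspended propositions). -/
mutual
/-- Right focus: Γ ⊢ [A⁺] -/
inductive RFoc : Ctx → PProp → Prop
  | idP {Γ A} : Hyp.susp A ∈ Γ → RFoc Γ A
  | downR {Γ A} : Inv Γ [] (Succ.neg A) → RFoc Γ (PProp.down A)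
  | orR1 {Γ A B} : RFoc Γ A → RFoc Γ (PProp.or A B)
  | orR2 {Γ A B} : RFoc Γ B → RFoc Γ (PProp.or A B)
  | topR {Γ} : RFoc Γ PProp.top
  | andR {Γ A B} : RFoc Γ A → RFoc Γ B → RFoc Γ (PProp.and A B)
/-- Inversion: Γ ; Ω ⊢ U -/
inductive Inv : Ctx → List PProp → Succ → Prop
  | focR {Γ A} : RFoc Γ A → Inv Γ [] (Succ.pos A)
  | focL {Γ A U} : Hyp.neg A ∈ Γ → Succ.stable U → LFoc Γ A U → Inv Γ [] U
  | etaP {Γ p Ω U} : Inv (Hyp.susp (PProp.atom p) :: Γ) Ω U → Inv Γ (PProp.atom p :: Ω) U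
  | downL {Γ A Ω U} : Inv (Hyp.neg A :: Γ) Ω U → Inv Γ (PProp.down A :: Ω) U
  | botL {Γ Ω U} : Inv Γ (PProp.bot :: Ω) U
  | orL {Γ A B Ω U} : Inv Γ (A :: Ω) U → Inv Γ (B :: Ω) U → Inv Γ (PProp.or A B :: Ω) U
  | topPL {Γ Ω U} : Inv Γ Ω U → Inv Γ (PProp.top :: Ω) U
  | andPL {Γ A B Ω U} : Inv Γ (A :: B :: Ω) U → Inv Γ (PProp.and A B :: Ω) U
  | etaN {Γ p} : Inv Γ [] (Succ.susp (NProp.atom p)) → Inv Γ [] (Succ.neg (NProp.atom p))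
  | upR {Γ A} : Inv Γ [] (Succ.pos A) → Inv Γ [] (Succ.neg (NProp.up A))
  | impR {Γ A B} : Inv Γ [A] (Succ.neg B) → Inv Γ [] (Succ.neg (NProp.imp A B))
  | topNR {Γ} : Inv Γ [] (Succ.neg NProp.top)
  | andNR {Γ A B} : Inv Γ [] (Succ.neg A) → Inv Γ [] (Succ.neg B) →
      Inv Γ [] (Succ.neg (NProp.and A B))
/-- Left focus: Γ ; [A⁻] ⊢ U -/
inductive LFoc : Ctx → NProp → Succ → Prop
  | idN {Γ A} : LFoc Γ A (Succ.susp A)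
  | upL {Γ A U} : Inv Γ [A] U → LFoc Γ (NProp.up A) U
  | impL {Γ A B U} : RFoc Γ A → LFoc Γ B U → LFoc Γ (NProp.imp A B) U
  | andL1 {Γ A B U} : LFoc Γ A U → LFoc Γ (NProp.and A B) U
  | andL2 {Γ A B U} : LFoc Γ B U → LFoc Γ (NProp.and A B) U
end

/- Unpolarized propositions and Kleene's G3 -/
inductive UProp : Type
  | atom : Nat → UProp
  | bot  : UProp
  | or   : UProp → UProp → UProp
  | top  : UProp
  | and  : UProp → UProp → UProp
  | imp  : UProp → UProp → UProp

inductive G3 : List UProp → UProp → Prop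
  | init {Γ p} : UProp.atom p ∈ Γ → G3 Γ (UProp.atom p)
  | botL {Γ Q} : UProp.bot ∈ Γ → G3 Γ Q
  | orR1 {Γ A B} : G3 Γ A → G3 Γ (UProp.or A B)
  | orR2 {Γ A B} : G3 Γ B → G3 Γ (UProp.or A B)
  | orL {Γ A B Q} : UProp.or A B ∈ Γ → G3 (A :: Γ) Q → G3 (B :: Γ) Q → G3 Γ Q
  | topR {Γ} : G3 Γ UProp.top
  | andR {Γ A B} : G3 Γ A → G3 Γ B → G3 Γ (UProp.and A B)
  | andL1 {Γ A B Q} : UProp.and A B ∈ Γ → G3 (A :: Γ) Q → G3 Γ Q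
  | andL2 {Γ A B Q} : UProp.and A B ∈ Γ → G3 (B :: Γ) Q → G3 Γ Q
  | impR {Γ A B} : G3 (A :: Γ) B → G3 Γ (UProp.imp A B)
  | impL {Γ A B Q} : UProp.imp A B ∈ Γ → G3 Γ A → G3 (B :: Γ) Q → G3 Γ Q

/-- G3 with an ordered auxiliary context Ψ: Γ; Ψ ⊢ Q -/
inductive G3Psi : List UProp → List UProp → UProp → Prop
  | cons {Γ P Ψ Q} : G3Psi (P :: Γ) Ψ Q → G3Psi Γ (P :: Ψ) Q
  | nil {Γ Q} : G3 Γ Q → G3Psi Γ [] Q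

/- Erasure -/
mutual
def eraseP : PProp → UProp
  | .atom p => .atom p
  | .down A => eraseN A
  | .bot => .bot
  | .or A B => .or (eraseP A) (eraseP B)
  | .top => .top
  | .and A B => .and (eraseP A) (eraseP B)
def eraseN : NProp → UProp
  | .atom p => .atom p
  | .up A => eraseP A
  | .imp A B => .imp (eraseP A) (eraseN B)
  | .top => .top
  | .and A B => .and (eraseN A) (eraseN B)
end

def eraseHyp : Hyp → UProp
  | .neg A => eraseN A
  | .susp A => eraseP A

def eraseCtx (Γ : Ctx) : List UProp := Γ.map eraseHyp

def eraseSucc : Succ → UProp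
  | .pos A => eraseP A
  | .neg A => eraseN A
  | .susp A => eraseN A

theorem monoI {Γ Ω U} (d : Inv Γ Ω U) : ∀ Γ', (∀ h ∈ Γ, h ∈ Γ') → Inv Γ' Ω U := by
  induction d using Inv.rec
    (motive_1 := fun Γ A _ => ∀ Γ', (∀ h ∈ Γ, h ∈ Γ') → RFoc Γ' A)
    (motive_3 := fun Γ A U _ => ∀ Γ', (∀ h ∈ Γ, h ∈ Γ') → LFoc Γ' A U) with
  | idP m => rename_i Γ' s; exact .idP (s _ m)
  | downR _ ih => rename_i Γ' s; exact .downR (ih Γ' s)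
  | orR1 _ ih => rename_i Γ' s; exact .orR1 (ih Γ' s)
  | orR2 _ ih => rename_i Γ' s; exact .orR2 (ih Γ' s)
  | topR => rename_i Γ' s; exact .topR
  | andR _ _ ih1 ih2 => rename_i Γ' s; exact .andR (ih1 Γ' s) (ih2 Γ' s)
  | focR _ ih => intro Γ' s; exact .focR (ih Γ' s)
  | focL m st _ ih => intro Γ' s; exact .focL (s _ m) st (ih Γ' s)
  | etaP _ ih => intro Γ' s; exact .etaP (ih _ (fun h hm => by
      rcases List.mem_cons.1 hm with h1 | h2
      · exact h1 ▸ List.mem_cons_self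
      · exact List.mem_cons_of_mem _ (s _ h2)))
  | downL _ ih => intro Γ' s; exact .downL (ih _ (fun h hm => by
      rcases List.mem_cons.1 hm with h1 | h2
      · exact h1 ▸ List.mem_cons_self
      · exact List.mem_cons_of_mem _ (s _ h2)))
  | botL => intro Γ' s; exact .botL
  | orL _ _ ih1 ih2 => intro Γ' s; exact .orL (ih1 Γ' s) (ih2 Γ' s)
  | topPL _ ih => intro Γ' s; exact .topPL (ih Γ' s)
  | andPL _ ih => intro Γ' s; exact .andPL (ih Γ' s)
  | etaN _ ih => intro Γ' s; exact .etaN (ih Γ' s)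
  | upR _ ih => intro Γ' s; exact .upR (ih Γ' s)
  | impR _ ih => intro Γ' s; exact .impR (ih Γ' s)
  | topNR => intro Γ' s; exact .topNR
  | andNR _ _ ih1 ih2 => intro Γ' s; exact .andNR (ih1 Γ' s) (ih2 Γ' s)
  | idN => rename_i Γ' s; exact .idN
  | upL _ ih => rename_i Γ' s; exact .upL (ih Γ' s)
  | impL _ _ ih1 ih2 => rename_i Γ' s; exact .impL (ih1 Γ' s) (ih2 Γ' s)
  | andL1 _ ih => rename_i Γ' s; exact .andL1 (ih Γ' s)
  | andL2 _ ih => rename_i Γ' s; exact .andL2 (ih Γ' s)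
private theorem suspNormal_cons {h : Hyp} {Γ : Ctx} (hh : Hyp.suspNormal h)
    (hΓ : Ctx.suspNormal Γ) : Ctx.suspNormal (h :: Γ) := by
  intro x hx
  rcases List.mem_cons.1 hx with h1 | h2
  · exact h1 ▸ hh
  · exact hΓ _ h2

private theorem mem_cons_self_sub {x : Hyp} {Γ : Ctx} : ∀ h ∈ Γ, h ∈ x :: Γ :=
  fun _ hm => List.mem_cons_of_mem _ hm

/-- Right commutative cut, at a fixed cut formula `A` and target `U`,
taking the principal positive cut at `A` as a hypothesis. -/
private theorem rcutAux {A : PProp} {U : Succ} (stU : U.stable)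
    (cutp : ∀ {Γ : Ctx} {Ω : List PProp},
      Ctx.suspNormal Γ → RFoc Γ A → Inv Γ (A :: Ω) U → Inv Γ Ω U)
    {Γ : Ctx} {Ω : List PProp} {V : Succ} (d : Inv Γ Ω V) :
    V = Succ.pos A → Ctx.suspNormal Γ → Inv Γ [A] U → Inv Γ Ω U := by
  induction d using Inv.rec
    (motive_1 := fun _ _ _ => True)
    (motive_3 := fun Γ B V _ =>
      V = Succ.pos A → Ctx.suspNormal Γ → Inv Γ [A] U → LFoc Γ B U) with
  | idP _ => trivial
  | downR _ _ => trivial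
  | orR1 _ _ => trivial
  | orR2 _ _ => trivial
  | topR => trivial
  | andR _ _ _ _ => trivial
  | focR r _ =>
      intro hV hΓ e
      injection hV with h
      subst h
      exact cutp hΓ r e
  | focL m _ _ ih =>
      intro hV hΓ e
      exact .focL m stU (ih hV hΓ e)
  | etaP _ ih =>
      intro hV hΓ e
      exact .etaP (ih hV (suspNormal_cons trivial hΓ) (monoI e _ mem_cons_self_sub))
  | downL _ ih =>
      intro hV hΓ e
      exact .downL (ih hV (suspNormal_cons trivial hΓ) (monoI e _ mem_cons_self_sub))
  | botL => intro _ _ _; exact .botL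
  | orL _ _ ih1 ih2 =>
      intro hV hΓ e
      exact .orL (ih1 hV hΓ e) (ih2 hV hΓ e)
  | topPL _ ih => intro hV hΓ e; exact .topPL (ih hV hΓ e)
  | andPL _ ih => intro hV hΓ e; exact .andPL (ih hV hΓ e)
  | etaN _ _ => intro hV; cases hV
  | upR _ _ => intro hV; cases hV
  | impR _ _ => intro hV; cases hV
  | topNR => intro hV; cases hV
  | andNR _ _ _ _ => intro hV; cases hV
  | idN => rename_i hV hΓ e; cases hV
  | upL _ ih => rename_i hV hΓ e; exact .upL (ih hV hΓ e)
  | impL r _ _ ih2 => rename_i hV hΓ e; exact .impL r (ih2 hV hΓ e)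
  | andL1 _ ih => rename_i hV hΓ e; exact .andL1 (ih hV hΓ e)
  | andL2 _ ih => rename_i hV hΓ e; exact .andL2 (ih hV hΓ e)

/-- Left commutative cut (substitution of a negative hypothesis `A`),
taking the principal negative cut at `A` as a hypothesis. -/
private theorem lcutAux {A : NProp}
    (cutn : ∀ {Γ : Ctx} {U : Succ}, Ctx.suspNormal Γ → Succ.suspNormal U →
      Succ.stable U → Inv Γ [] (Succ.neg A) → LFoc Γ A U → Inv Γ [] U)
    {Δ : Ctx} {Ω : List PProp} {V : Succ} (e : Inv Δ Ω V) :
    ∀ Γ : Ctx, Ctx.suspNormal Γ → Succ.suspNormal V → Inv Γ [] (Succ.neg A) →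
      (∀ h ∈ Δ, h = Hyp.neg A ∨ h ∈ Γ) → Inv Γ Ω V := by
  induction e using Inv.rec
    (motive_1 := fun Δ B _ => ∀ Γ : Ctx, Ctx.suspNormal Γ → Inv Γ [] (Succ.neg A) →
      (∀ h ∈ Δ, h = Hyp.neg A ∨ h ∈ Γ) → RFoc Γ B)
    (motive_3 := fun Δ B V _ => ∀ Γ : Ctx, Ctx.suspNormal Γ → Succ.suspNormal V →
      Inv Γ [] (Succ.neg A) → (∀ h ∈ Δ, h = Hyp.neg A ∨ h ∈ Γ) → LFoc Γ B V) with
  | idP m =>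
      rename_i Γ' hΓ d s
      rcases s _ m with h | h
      · cases h
      · exact .idP h
  | downR _ ih =>
      rename_i Γ' hΓ d s
      exact .downR (ih Γ' hΓ trivial d s)
  | orR1 _ ih => rename_i Γ' hΓ d s; exact .orR1 (ih Γ' hΓ d s)
  | orR2 _ ih => rename_i Γ' hΓ d s; exact .orR2 (ih Γ' hΓ d s)
  | topR => rename_i Γ' hΓ d s; exact .topR
  | andR _ _ ih1 ih2 =>
      rename_i Γ' hΓ d s
      exact .andR (ih1 Γ' hΓ d s) (ih2 Γ' hΓ d s)
  | focR _ ih =>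
      intro Γ' hΓ hV d s
      exact .focR (ih Γ' hΓ d s)
  | focL m st _ ih =>
      intro Γ' hΓ hV d s
      have l' := ih Γ' hΓ hV d s
      rcases s _ m with h | h
      · injection h with h
        subst h
        exact cutn hΓ hV st d l'
      · exact .focL h st l'
  | etaP _ ih =>
      intro Γ' hΓ hV d s
      refine .etaP (ih _ (suspNormal_cons trivial hΓ) hV (monoI d _ mem_cons_self_sub) ?_)
      intro h hm
      rcases List.mem_cons.1 hm with h1 | h2
      · exact Or.inr (h1 ▸ List.mem_cons_self)
      · rcases s _ h2 with h3 | h3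
        · exact Or.inl h3
        · exact Or.inr (List.mem_cons_of_mem _ h3)
  | downL _ ih =>
      intro Γ' hΓ hV d s
      refine .downL (ih _ (suspNormal_cons trivial hΓ) hV (monoI d _ mem_cons_self_sub) ?_)
      intro h hm
      rcases List.mem_cons.1 hm with h1 | h2
      · exact Or.inr (h1 ▸ List.mem_cons_self)
      · rcases s _ h2 with h3 | h3
        · exact Or.inl h3
        · exact Or.inr (List.mem_cons_of_mem _ h3)
  | botL => intro _ _ _ _ _; exact .botL
  | orL _ _ ih1 ih2 =>
      intro Γ' hΓ hV d s
      exact .orL (ih1 Γ' hΓ hV d s) (ih2 Γ' hΓ hV d s)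
  | topPL _ ih => intro Γ' hΓ hV d s; exact .topPL (ih Γ' hΓ hV d s)
  | andPL _ ih => intro Γ' hΓ hV d s; exact .andPL (ih Γ' hΓ hV d s)
  | etaN _ ih => intro Γ' hΓ hV d s; exact .etaN (ih Γ' hΓ trivial d s)
  | upR _ ih => intro Γ' hΓ hV d s; exact .upR (ih Γ' hΓ trivial d s)
  | impR _ ih => intro Γ' hΓ hV d s; exact .impR (ih Γ' hΓ trivial d s)
  | topNR => intro _ _ _ _ _; exact .topNR
  | andNR _ _ ih1 ih2 =>
      intro Γ' hΓ hV d s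
      exact .andNR (ih1 Γ' hΓ trivial d s) (ih2 Γ' hΓ trivial d s)
  | idN => rename_i Γ' hΓ hV d s; exact .idN
  | upL _ ih => rename_i Γ' hΓ hV d s; exact .upL (ih Γ' hΓ hV d s)
  | impL _ _ ih1 ih2 =>
      rename_i Γ' hΓ hV d s
      exact .impL (ih1 Γ' hΓ d s) (ih2 Γ' hΓ hV d s)
  | andL1 _ ih => rename_i Γ' hΓ hV d s; exact .andL1 (ih Γ' hΓ hV d s)
  | andL2 _ ih => rename_i Γ' hΓ hV d s; exact .andL2 (ih Γ' hΓ hV d s)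

mutual
/-- Principal positive cut. -/
theorem cutPos : ∀ (A : PProp) {Γ : Ctx} {Ω : List PProp} {U : Succ},
    Ctx.suspNormal Γ → Succ.suspNormal U → RFoc Γ A → Inv Γ (A :: Ω) U → Inv Γ Ω U := by
  intro A Γ Ω U hΓ hU r e
  cases r with
  | idP m =>
      have hA := hΓ _ m
      cases A with
      | atom p =>
          cases e with
          | etaP e' =>
              refine monoI e' Γ ?_
              intro h hm
              rcases List.mem_cons.1 hm with h1 | h2
              · exact h1 ▸ m
              · exact h2
      | down A' => exact False.elim hA
      | bot => exact False.elim hA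
      | or A1 A2 => exact False.elim hA
      | top => exact False.elim hA
      | and A1 A2 => exact False.elim hA
  | downR d =>
      cases e with
      | downL e' =>
          refine lcutAux (fun hΓ' hV' st' d' l' => cutNeg _ hΓ' hV' st' d' l') e' Γ hΓ hU d ?_
          intro h hm
          rcases List.mem_cons.1 hm with h1 | h2
          · exact Or.inl h1
          · exact Or.inr h2
  | orR1 r' =>
      cases e with
      | orL e1 e2 => exact cutPos _ hΓ hU r' e1
  | orR2 r' =>
      cases e with
      | orL e1 e2 => exact cutPos _ hΓ hU r' e2
  | topR =>
      cases e with
      | topPL e' => exact e'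
  | andR r1 r2 =>
      cases e with
      | andPL e' => exact cutPos _ hΓ hU r2 (cutPos _ hΓ hU r1 e')

termination_by A => sizeOf A

/-- Principal negative cut. -/
theorem cutNeg : ∀ (A : NProp) {Γ : Ctx} {U : Succ},
    Ctx.suspNormal Γ → Succ.suspNormal U → Succ.stable U →
    Inv Γ [] (Succ.neg A) → LFoc Γ A U → Inv Γ [] U := by
  intro A Γ U hΓ hU st d l
  cases l with
  | idN =>
      cases A with
      | atom p =>
          cases d with
          | etaN d' => exact d'
          | focL _ st' _ => exact False.elim st'
      | up A' => exact False.elim hU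
      | imp A' B => exact False.elim hU
      | top => exact False.elim hU
      | and A1 A2 => exact False.elim hU
  | upL e =>
      cases d with
      | upR d' => exact rcutAux st (fun hΓ' r' e' => cutPos _ hΓ' hU r' e') d' rfl hΓ e
      | focL _ st' _ => exact False.elim st'
  | impL r' l' =>
      cases d with
      | impR d' => exact cutNeg _ hΓ hU st (cutPos _ hΓ trivial r' d') l'
      | focL _ st' _ => exact False.elim st'
  | andL1 l' =>
      cases d with
      | andNR d1 d2 => exact cutNeg _ hΓ hU st d1 l'
      | focL _ st' _ => exact False.elim st'
  | andL2 l' =>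
      cases d with
      | andNR d1 d2 => exact cutNeg _ hΓ hU st d2 l'
      | focL _ st' _ => exact False.elim st'
termination_by A => sizeOf A
end
/-- Cut admissibility, positive principal case. -/
theorem cut_positive_principal {Γ : Ctx} {A : PProp} {Ω : List PProp} {U : Succ}
    (hΓ : Ctx.suspNormal Γ) (hU : Succ.suspNormal U)
    (h1 : RFoc Γ A) (h2 : Inv Γ (A :: Ω) U) :
    Inv Γ Ω U := by
  exact cutPos A hΓ hU h1 h2

end StructuralFocalization
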